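/- Let r ∈ ℕ, r ≥ 2, and let Θ be the generalized Mordell–Tornheim zeta function. Then for x > 0 and t > 1 - r, Θ(r,r,t,x) = Θ(0,r,t+r,x) + S(r,t) + x^{-t} Θ(0,r,t+r,1/x), where S(r,t) = (1+(-1)^r) x^{r-1} Θ(r-1,1,t+r,x) + Σ_{ℓ=1}^{r-2} ((-1)^{ℓ+1} + C(r-1,ℓ)) x^ℓ Θ(ℓ+1, r-ℓ, t+r-1, x). -/

import Mathlib

open Real

noncomputable def Theta (r s t x : ℝ) : ℝ :=
  ∑' n : ℕ, ∑' m : ℕ,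
    1 / (((n : ℝ) + 1) ^ r * ((m : ℝ) + 1) ^ s * (((n : ℝ) + 1) + ((m : ℝ) + 1) * x) ^ t)

/-! ### Pure algebra lemmas -/

private lemma alt_telescope (A : ℕ → ℝ) (k : ℕ) :
    ∑ ℓ ∈ Finset.Icc 1 k, (-1:ℝ)^(ℓ+1) * (A ℓ + A (ℓ+1))
      = A 1 - (-1:ℝ)^k * A (k+1) := by
  induction k with
  | zero => simp
  | succ k ih =>
      rw [Finset.sum_Icc_succ_top (by omega), ih]
      ring

private lemma Icc_one_sum (f : ℕ → ℝ) (n : ℕ) :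
    ∑ ℓ ∈ Finset.Icc 1 n, f ℓ = ∑ j ∈ Finset.range n, f (j+1) := by
  rw [← Finset.Ico_add_one_right_eq_Icc, Finset.sum_Ico_eq_sum_range]
  simp [add_comm]

private lemma pascal_split (A : ℕ → ℝ) (k : ℕ) :
    ∑ ℓ ∈ Finset.Icc 1 (k+1), ((k+2).choose ℓ : ℝ) * A ℓ
      = ∑ ℓ ∈ Finset.Icc 1 k, ((k+1).choose ℓ : ℝ) * (A ℓ + A (ℓ+1)) + A 1 + A (k+1) := by
  rw [Icc_one_sum, Icc_one_sum]
  have h1 : ∀ j, ((k+2).choose (j+1) : ℝ) = ((k+1).choose j : ℝ) + ((k+1).choose (j+1) : ℝ) := by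
    intro j
    have := Nat.choose_succ_succ (k+1) j
    push_cast [this]
    ring
  calc ∑ j ∈ Finset.range (k+1), ((k+2).choose (j+1) : ℝ) * A (j+1)
      = ∑ j ∈ Finset.range (k+1), (((k+1).choose j : ℝ) * A (j+1)
          + ((k+1).choose (j+1) : ℝ) * A (j+1)) := by
        refine Finset.sum_congr rfl fun j _ => ?_
        rw [h1]; ring
    _ = ∑ j ∈ Finset.range (k+1), ((k+1).choose j : ℝ) * A (j+1)
          + ∑ j ∈ Finset.range (k+1), ((k+1).choose (j+1) : ℝ) * A (j+1) := by
        rw [Finset.sum_add_distrib]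
    _ = (∑ j ∈ Finset.range k, ((k+1).choose (j+1) : ℝ) * A (j+2) + ((k+1).choose 0 : ℝ) * A 1)
          + (∑ j ∈ Finset.range k, ((k+1).choose (j+1) : ℝ) * A (j+1)
              + ((k+1).choose (k+1) : ℝ) * A (k+1)) := by
        rw [Finset.sum_range_succ' (fun j => ((k+1).choose j : ℝ) * A (j+1)) k,
          Finset.sum_range_succ]
    _ = ∑ j ∈ Finset.range k, ((k+1).choose (j+1) : ℝ) * (A (j+1) + A (j+2)) + A 1 + A (k+1) := by
        rw [show (∑ j ∈ Finset.range k, ((k+1).choose (j+1) : ℝ) * (A (j+1) + A (j+2)))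
            = ∑ j ∈ Finset.range k, (((k+1).choose (j+1) : ℝ) * A (j+1)
                + ((k+1).choose (j+1) : ℝ) * A (j+2)) from
            Finset.sum_congr rfl fun j _ => by ring,
          Finset.sum_add_distrib]
        simp only [Nat.choose_zero_right, Nat.choose_self, Nat.cast_one]
        ring

private lemma alg (A : ℕ → ℝ) (k : ℕ) :
    ∑ ℓ ∈ Finset.range (k+3), ((k+2).choose ℓ : ℝ) * A ℓ
      = A 0 + ((1 + (-1:ℝ)^(k+2)) * A (k+1)
          + ∑ ℓ ∈ Finset.Icc 1 k, ((-1:ℝ)^(ℓ+1) + ((k+1).choose ℓ : ℝ)) * (A ℓ + A (ℓ+1)))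
        + A (k+2) := by
  have hsplit : ∑ ℓ ∈ Finset.Icc 1 k, ((-1:ℝ)^(ℓ+1) + ((k+1).choose ℓ : ℝ)) * (A ℓ + A (ℓ+1))
      = ∑ ℓ ∈ Finset.Icc 1 k, (-1:ℝ)^(ℓ+1) * (A ℓ + A (ℓ+1))
        + ∑ ℓ ∈ Finset.Icc 1 k, ((k+1).choose ℓ : ℝ) * (A ℓ + A (ℓ+1)) := by
    rw [← Finset.sum_add_distrib]
    exact Finset.sum_congr rfl fun ℓ _ => by ring
  rw [hsplit, alt_telescope]
  have hL : ∑ ℓ ∈ Finset.range (k+3), ((k+2).choose ℓ : ℝ) * A ℓ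
      = ((k+2).choose 0 : ℝ) * A 0 + ∑ ℓ ∈ Finset.Icc 1 (k+1), ((k+2).choose ℓ : ℝ) * A ℓ
        + ((k+2).choose (k+2) : ℝ) * A (k+2) := by
    rw [Finset.sum_range_succ, Icc_one_sum, Finset.sum_range_succ' (fun ℓ => ((k+2).choose ℓ : ℝ) * A ℓ) (k+1)]
    ring
  rw [hL, pascal_split, Nat.choose_zero_right, Nat.choose_self]
  push_cast
  ring

/-! ### Analytic infrastructure -/

noncomputable def Fx (x a b c : ℝ) (p : ℕ × ℕ) : ℝ :=
  1 / (((p.1 : ℝ) + 1) ^ a * ((p.2 : ℝ) + 1) ^ b * (((p.1 : ℝ) + 1) + ((p.2 : ℝ) + 1) * x) ^ c)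

private lemma Fx_nonneg {x : ℝ} (hx : 0 < x) (a b c : ℝ) (p : ℕ × ℕ) : 0 ≤ Fx x a b c p := by
  unfold Fx
  positivity

private lemma summable_shift (u : ℝ) (hu : 1 < u) :
    Summable (fun n : ℕ => ((n:ℝ)+1) ^ (-u)) := by
  have h0 : Summable (fun n : ℕ => 1 / ((n:ℝ))^u) := Real.summable_one_div_nat_rpow.mpr hu
  have h1 : Summable (fun n : ℕ => 1 / (((n+1:ℕ):ℝ))^u) := (summable_nat_add_iff 1).mpr h0
  refine h1.congr fun n => ?_
  push_cast
  rw [Real.rpow_neg (by positivity), one_div]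

private lemma summable_Fx {x : ℝ} (hx : 0 < x) {a b c1 c2 : ℝ} (ha : 0 ≤ a) (hb : 0 ≤ b)
    (hc1 : 0 ≤ c1) (hc2 : 0 ≤ c2) (hu : 1 < a + c1) (hv : 1 < b + c2) :
    Summable (Fx x a b (c1 + c2)) := by
  have hn := summable_shift (a + c1) hu
  have hm := (summable_shift (b + c2) hv).mul_right (x ^ (-c2))
  have hprod : Summable (fun q : ℕ × ℕ =>
      ((q.1:ℝ)+1) ^ (-(a+c1)) * (((q.2:ℝ)+1) ^ (-(b+c2)) * x ^ (-c2))) :=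
    hn.mul_of_nonneg hm (fun n => by positivity) (fun m => by positivity)
  refine hprod.of_nonneg_of_le (Fx_nonneg hx a b (c1+c2)) fun p => ?_
  obtain ⟨n, m⟩ := p
  set N : ℝ := (n:ℝ)+1 with hNdef
  set M : ℝ := (m:ℝ)+1 with hMdef
  have hN0 : 0 < N := by positivity
  have hM0 : 0 < M := by positivity
  set B : ℝ := N + M * x with hBdef
  have hB0 : 0 < B := by positivity
  have hB1 : N ≤ B := by rw [hBdef]; nlinarith
  have hB2 : M * x ≤ B := by rw [hBdef]; nlinarith
  have h1 : N ^ c1 ≤ B ^ c1 := Real.rpow_le_rpow hN0.le hB1 hc1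
  have h2 : M ^ c2 * x ^ c2 ≤ B ^ c2 := by
    rw [← Real.mul_rpow hM0.le hx.le]
    exact Real.rpow_le_rpow (by positivity) hB2 hc2
  have key : N ^ (a+c1) * (M ^ (b+c2) * x ^ c2) ≤ N ^ a * M ^ b * B ^ (c1+c2) := by
    calc N ^ (a+c1) * (M ^ (b+c2) * x ^ c2)
        = (N ^ a * M ^ b) * (N ^ c1 * (M ^ c2 * x ^ c2)) := by
          rw [Real.rpow_add hN0, Real.rpow_add hM0]; ring
      _ ≤ (N ^ a * M ^ b) * (B ^ c1 * B ^ c2) := by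
          refine mul_le_mul_of_nonneg_left ?_ (by positivity)
          exact mul_le_mul h1 h2 (by positivity) (by positivity)
      _ = N ^ a * M ^ b * B ^ (c1+c2) := by rw [Real.rpow_add hB0]
  calc Fx x a b (c1+c2) (n, m) = 1 / (N ^ a * M ^ b * B ^ (c1+c2)) := rfl
    _ ≤ 1 / (N ^ (a+c1) * (M ^ (b+c2) * x ^ c2)) := by
        apply one_div_le_one_div_of_le (by positivity) key
    _ = N ^ (-(a+c1)) * (M ^ (-(b+c2)) * x ^ (-c2)) := by
        rw [Real.rpow_neg hN0.le, Real.rpow_neg hM0.le, Real.rpow_neg hx.le, one_div,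
          mul_inv, mul_inv]

private lemma summable_A {x : ℝ} (hx : 0 < x) {a b c : ℝ} (ha : 0 ≤ a) (hb : 0 ≤ b)
    (hc : 1 < c) (hab : 2 ≤ a + b) : Summable (Fx x a b c) := by
  rcases le_or_gt a 1 with h | h
  · have : c = (1 - a + (c-1)/2) + ((c-1)/2 + a) := by ring
    rw [this]
    exact summable_Fx hx ha hb (by linarith) (by linarith) (by linarith) (by linarith)
  · rcases le_or_gt b 1 with h' | h'
    · have : c = ((c-1)/2 + b) + (1 - b + (c-1)/2) := by ring
      rw [this]
      exact summable_Fx hx ha hb (by linarith) (by linarith) (by linarith) (by linarith)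
    · have : c = c/2 + c/2 := by ring
      rw [this]
      exact summable_Fx hx ha hb (by linarith) (by linarith) (by linarith) (by linarith)

private lemma theta_eq {x : ℝ} (a b c : ℝ) (h : Summable (Fx x a b c)) :
    Theta a b c x = ∑' p : ℕ × ℕ, Fx x a b c p := by
  rw [Theta]
  exact (Summable.tsum_prod' h h.prod_factor).symm

/-! ### Termwise identities -/

private lemma frac_split {N M B : ℝ} (hN : 0 < N) (hM : 0 < M) (hB : 0 < B)
    (c : ℝ) (r ℓ : ℕ) (hℓ : ℓ ≤ r) (x : ℝ) :
    (r.choose ℓ : ℝ) * x^ℓ * (1 / (N^(ℓ:ℝ) * M^((r:ℝ) - ℓ) * B^c))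
      = ((M*x)^ℓ * N^(r-ℓ) * (r.choose ℓ : ℝ)) / (N^r * M^r * B^c) := by
  have eb : M^((r:ℝ) - ℓ) = M^((r-ℓ:ℕ)) := by
    rw [show (r:ℝ) - ℓ = ((r - ℓ:ℕ):ℝ) from by rw [Nat.cast_sub hℓ], Real.rpow_natCast]
  have ea : N^((ℓ:ℝ)) = N^ℓ := Real.rpow_natCast N ℓ
  rw [ea, eb]
  have hNr : N^ℓ * N^(r-ℓ) = N^r := by rw [← pow_add]; congr 1; omega
  have hMr : M^(r-ℓ) * M^ℓ = M^r := by rw [← pow_add]; congr 1; omega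
  have hBc : (0:ℝ) < B^c := Real.rpow_pos_of_pos hB c
  rw [mul_one_div, div_eq_div_iff (by positivity) (by positivity), ← hNr, ← hMr]
  ring

private lemma term_bin {x : ℝ} (hx : 0 < x) (r : ℕ) (t : ℝ) (p : ℕ × ℕ) :
    Fx x r r t p = ∑ ℓ ∈ Finset.range (r+1),
      (r.choose ℓ : ℝ) * x^ℓ * Fx x ℓ ((r:ℝ) - ℓ) (t + r) p := by
  obtain ⟨n, m⟩ := p
  have hN : (0:ℝ) < (n:ℝ)+1 := by positivity
  have hM : (0:ℝ) < (m:ℝ)+1 := by positivity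
  have hB : (0:ℝ) < ((n:ℝ)+1) + ((m:ℝ)+1)*x := by positivity
  have hterm : ∀ ℓ ∈ Finset.range (r+1),
      (r.choose ℓ : ℝ) * x^ℓ * Fx x ℓ ((r:ℝ) - ℓ) (t + r) (n, m)
      = ((((m:ℝ)+1)*x)^ℓ * ((n:ℝ)+1)^(r-ℓ) * (r.choose ℓ : ℝ))
          / (((n:ℝ)+1)^r * ((m:ℝ)+1)^r * (((n:ℝ)+1) + ((m:ℝ)+1)*x)^(t + (r:ℝ))) := by
    intro ℓ hℓ
    have hℓr : ℓ ≤ r := by have := Finset.mem_range.mp hℓ; omega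
    exact frac_split hN hM hB _ r ℓ hℓr x
  rw [Finset.sum_congr rfl hterm, ← Finset.sum_div, ← add_pow]
  show (1:ℝ) / (((n:ℝ)+1)^(r:ℝ) * ((m:ℝ)+1)^(r:ℝ) * (((n:ℝ)+1) + ((m:ℝ)+1)*x)^t) = _
  rw [Real.rpow_natCast, Real.rpow_natCast, Real.rpow_add hB, Real.rpow_natCast]
  have h3 : (0:ℝ) < (((n:ℝ)+1) + ((m:ℝ)+1)*x)^t := Real.rpow_pos_of_pos hB t
  rw [div_eq_div_iff (by positivity) (by positivity)]
  ring

private lemma term_B_gen {N M B x : ℝ} (hN : 0 < N) (hM : 0 < M) (hB : 0 < B)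
    (hx : 0 < x) (hBdef : B = N + M * x) (a b c : ℝ) :
    1 / (N^(a+1) * M^b * B^c)
      = 1 / (N^a * M^b * B^(c+1)) + x * (1 / (N^(a+1) * M^(b-1) * B^(c+1))) := by
  have eN : N^(a+1) = N^a * N := Real.rpow_add_one hN.ne' a
  have eM : M^b = M^(b-1) * M := by rw [← Real.rpow_add_one hM.ne']; congr 1; ring
  have eB : B^(c+1) = B^c * B := Real.rpow_add_one hB.ne' c
  have h1 : (0:ℝ) < N^a := Real.rpow_pos_of_pos hN a
  have h2 : (0:ℝ) < M^(b-1) := Real.rpow_pos_of_pos hM _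
  have h3 : (0:ℝ) < B^c := Real.rpow_pos_of_pos hB c
  rw [eN, eM, eB, hBdef]
  field_simp

/-! ### Theta-level identities -/

private lemma theta_bin {x : ℝ} (hx : 0 < x) (r : ℕ) (t : ℝ)
    (hA : ∀ ℓ, ℓ ≤ r → Summable (Fx x ℓ ((r:ℝ) - ℓ) (t + r))) :
    Theta r r t x = ∑ ℓ ∈ Finset.range (r+1),
      (r.choose ℓ : ℝ) * x^ℓ * ∑' p : ℕ × ℕ, Fx x ℓ ((r:ℝ) - ℓ) (t + r) p := by
  have hfe : Fx x r r t = fun p => ∑ ℓ ∈ Finset.range (r+1),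
      (r.choose ℓ : ℝ) * x^ℓ * Fx x ℓ ((r:ℝ) - ℓ) (t + r) p := funext (term_bin hx r t)
  have hs : ∀ ℓ ∈ Finset.range (r+1),
      Summable (fun p : ℕ × ℕ => (r.choose ℓ : ℝ) * x^ℓ * Fx x ℓ ((r:ℝ) - ℓ) (t + r) p) := by
    intro ℓ hℓ
    exact (hA ℓ (by have := Finset.mem_range.mp hℓ; omega)).mul_left _
  have hsum : Summable (Fx x r r t) := by
    rw [hfe]; exact summable_sum hs
  rw [theta_eq _ _ _ hsum, hfe, Summable.tsum_finsetSum hs]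
  exact Finset.sum_congr rfl fun ℓ _ => tsum_mul_left

private lemma theta_B {x : ℝ} (hx : 0 < x) (r ℓ : ℕ) (t : ℝ)
    (h1 : Summable (Fx x ℓ ((r:ℝ) - ℓ) (t + r)))
    (h2 : Summable (Fx x ((ℓ+1:ℕ):ℝ) ((r:ℝ) - ((ℓ+1:ℕ):ℝ)) (t + r))) :
    Theta ((ℓ:ℝ)+1) ((r:ℝ) - ℓ) (t + r - 1) x
      = (∑' p : ℕ×ℕ, Fx x ℓ ((r:ℝ) - ℓ) (t + r) p)
        + x * ∑' p : ℕ×ℕ, Fx x ((ℓ+1:ℕ):ℝ) ((r:ℝ) - ((ℓ+1:ℕ):ℝ)) (t + r) p := by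
  have hfe : Fx x ((ℓ:ℝ)+1) ((r:ℝ) - ℓ) (t + r - 1)
      = fun p => Fx x ℓ ((r:ℝ) - ℓ) (t + r) p
          + x * Fx x ((ℓ+1:ℕ):ℝ) ((r:ℝ) - ((ℓ+1:ℕ):ℝ)) (t + r) p := by
    funext p
    obtain ⟨n, m⟩ := p
    have hN : (0:ℝ) < (n:ℝ)+1 := by positivity
    have hM : (0:ℝ) < (m:ℝ)+1 := by positivity
    have hB : (0:ℝ) < ((n:ℝ)+1) + ((m:ℝ)+1)*x := by positivity
    have key := term_B_gen hN hM hB hx rfl (ℓ:ℝ) ((r:ℝ) - ℓ) (t + (r:ℝ) - 1)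
    rw [show t + (r:ℝ) - 1 + 1 = t + (r:ℝ) from by ring] at key
    show (1:ℝ) / (((n:ℝ)+1)^((ℓ:ℝ)+1) * ((m:ℝ)+1)^((r:ℝ) - ℓ)
          * ((((n:ℝ)+1) + ((m:ℝ)+1)*x))^(t + (r:ℝ) - 1)) = _
    rw [key]
    have c1 : ((ℓ+1:ℕ):ℝ) = (ℓ:ℝ)+1 := by push_cast; ring
    show _ = (1:ℝ) / (((n:ℝ)+1)^((ℓ:ℝ)) * ((m:ℝ)+1)^((r:ℝ) - ℓ)
          * ((((n:ℝ)+1) + ((m:ℝ)+1)*x))^(t + (r:ℝ)))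
        + x * ((1:ℝ) / (((n:ℝ)+1)^(((ℓ+1:ℕ):ℝ)) * ((m:ℝ)+1)^((r:ℝ) - ((ℓ+1:ℕ):ℝ))
          * ((((n:ℝ)+1) + ((m:ℝ)+1)*x))^(t + (r:ℝ))))
    rw [c1, show (r:ℝ) - ((ℓ:ℝ)+1) = (r:ℝ) - ℓ - 1 from by ring]
  have hsum : Summable (Fx x ((ℓ:ℝ)+1) ((r:ℝ) - ℓ) (t + r - 1)) := by
    rw [hfe]; exact h1.add (h2.mul_left x)
  rw [theta_eq _ _ _ hsum, hfe, Summable.tsum_add h1 (h2.mul_left x), tsum_mul_left]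

private lemma inv_piece {x : ℝ} (hx : 0 < x) (r : ℕ) (t : ℝ)
    (hS : Summable (Fx x r 0 (t + r))) :
    x ^ (-t) * Theta 0 r (t + r) (1/x) = x ^ (r:ℕ) * ∑' p : ℕ × ℕ, Fx x r 0 (t + r) p := by
  have hterm : ∀ n m : ℕ,
      (1:ℝ) / (((n:ℝ)+1)^(0:ℝ) * ((m:ℝ)+1)^(r:ℝ) * (((n:ℝ)+1) + ((m:ℝ)+1)*(1/x))^(t+(r:ℝ)))
      = x^(t+(r:ℝ)) * Fx x r 0 (t + r) (m, n) := by
    intro n m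
    have hN : (0:ℝ) < (n:ℝ)+1 := by positivity
    have hM : (0:ℝ) < (m:ℝ)+1 := by positivity
    have e : ((n:ℝ)+1) + ((m:ℝ)+1)*(1/x) = (((m:ℝ)+1) + ((n:ℝ)+1)*x)/x := by
      field_simp; ring
    rw [e, Real.div_rpow (by positivity) hx.le]
    show _ = x^(t+(r:ℝ)) * ((1:ℝ)/(((m:ℝ)+1)^(r:ℝ) * ((n:ℝ)+1)^(0:ℝ)
        * ((((m:ℝ)+1) + ((n:ℝ)+1)*x))^(t+(r:ℝ))))
    rw [Real.rpow_zero]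
    have h1 : (0:ℝ) < (((m:ℝ)+1) + ((n:ℝ)+1)*x)^(t+(r:ℝ)) :=
      Real.rpow_pos_of_pos (by positivity) _
    have h2 : (0:ℝ) < ((m:ℝ)+1)^(r:ℝ) := Real.rpow_pos_of_pos hM _
    have h3 : (0:ℝ) < x^(t+(r:ℝ)) := Real.rpow_pos_of_pos hx _
    field_simp
  have hG : Summable (fun p : ℕ × ℕ => Fx x r 0 (t + r) (p.2, p.1)) := by
    have heq : (fun p : ℕ × ℕ => Fx x r 0 (t + r) (p.2, p.1))
        = (Fx x r 0 (t + r)) ∘ (Equiv.prodComm ℕ ℕ) := rfl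
    rw [heq]
    exact ((Equiv.prodComm ℕ ℕ).summable_iff).mpr hS
  have hswap : ∑' n : ℕ, ∑' m : ℕ, Fx x r 0 (t + r) (m, n)
      = ∑' p : ℕ × ℕ, Fx x r 0 (t + r) p := by
    rw [← (Equiv.prodComm ℕ ℕ).tsum_eq (Fx x r 0 (t + r))]
    exact (Summable.tsum_prod' hG hG.prod_factor).symm
  have hmain : (∑' (n:ℕ), ∑' (m:ℕ), (1:ℝ) / (((n:ℝ)+1)^(0:ℝ) * ((m:ℝ)+1)^(r:ℝ)
        * (((n:ℝ)+1) + ((m:ℝ)+1)*(1/x))^(t+(r:ℝ))))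
      = x^(t+(r:ℝ)) * ∑' p : ℕ × ℕ, Fx x r 0 (t + r) p := by
    rw [← hswap, ← tsum_mul_left]
    refine tsum_congr fun n => ?_
    rw [← tsum_mul_left]
    exact tsum_congr fun m => hterm n m
  show x ^ (-t) * (∑' (n:ℕ), ∑' (m:ℕ), (1:ℝ) / (((n:ℝ)+1)^(0:ℝ) * ((m:ℝ)+1)^(r:ℝ)
        * (((n:ℝ)+1) + ((m:ℝ)+1)*(1/x))^(t+(r:ℝ)))) = _
  rw [hmain, ← mul_assoc, ← Real.rpow_add hx,
    show -t + (t+(r:ℝ)) = ((r:ℕ):ℝ) from by push_cast; ring, Real.rpow_natCast]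

theorem theta_rr_decomposition (r : ℕ) (hr : 2 ≤ r) (x : ℝ) (hx : 0 < x)
    (t : ℝ) (ht : 1 - r < t) :
    Theta r r t x =
      Theta 0 r (t + r) x
      + ((1 + (-1 : ℝ) ^ r) * x ^ (r - 1) * Theta ((r : ℝ) - 1) 1 (t + r) x
          + ∑ ℓ ∈ Finset.Icc 1 (r - 2),
              ((-1 : ℝ) ^ (ℓ + 1) + ((r - 1).choose ℓ : ℝ)) * x ^ ℓ
                * Theta ((ℓ : ℝ) + 1) ((r : ℝ) - ℓ) (t + r - 1) x)
      + x ^ (-t) * Theta 0 r (t + r) (1 / x) := by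
  obtain ⟨k, rfl⟩ : ∃ k, r = k + 2 := ⟨r - 2, by omega⟩
  have hc1 : 1 < t + ((k+2:ℕ):ℝ) := by push_cast at ht ⊢; linarith
  have hA : ∀ ℓ, ℓ ≤ k+2 →
      Summable (Fx x (ℓ:ℝ) (((k+2:ℕ):ℝ) - ℓ) (t + ((k+2:ℕ):ℝ))) := by
    intro ℓ hℓ
    refine summable_A hx (by positivity) ?_ hc1 ?_
    · have h := (Nat.cast_le (α := ℝ)).mpr hℓ
      linarith
    · rw [show (ℓ:ℝ) + (((k+2:ℕ):ℝ) - ℓ) = ((k+2:ℕ):ℝ) from by ring]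
      push_cast; linarith
  rw [theta_bin hx (k+2) t hA]
  have halg := alg (fun ℓ => x^ℓ *
      ∑' p : ℕ×ℕ, Fx x (ℓ:ℝ) (((k+2:ℕ):ℝ) - ℓ) (t + ((k+2:ℕ):ℝ)) p) k
  rw [show k+2+1 = k+3 from by omega]
  rw [show (∑ ℓ ∈ Finset.range (k+3), ((k+2).choose ℓ : ℝ) * x^ℓ *
        ∑' p : ℕ×ℕ, Fx x (ℓ:ℝ) (((k+2:ℕ):ℝ) - ℓ) (t + ((k+2:ℕ):ℝ)) p)
      = ∑ ℓ ∈ Finset.range (k+3), ((k+2).choose ℓ : ℝ) * (x^ℓ *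
        ∑' p : ℕ×ℕ, Fx x (ℓ:ℝ) (((k+2:ℕ):ℝ) - ℓ) (t + ((k+2:ℕ):ℝ)) p) from
      Finset.sum_congr rfl fun ℓ _ => mul_assoc _ _ _]
  rw [halg]
  simp only [show k+2-2 = k from by omega, show k+2-1 = k+1 from by omega]
  -- piece 0
  have ecast0 : Fx x ((0:ℕ):ℝ) (((k+2:ℕ):ℝ) - ((0:ℕ):ℝ)) (t + ((k+2:ℕ):ℝ))
      = Fx x 0 ((k+2:ℕ):ℝ) (t + ((k+2:ℕ):ℝ)) := by norm_num
  have e0 : Theta 0 ((k+2:ℕ):ℝ) (t + ((k+2:ℕ):ℝ)) x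
      = x^(0:ℕ) * ∑' p : ℕ×ℕ, Fx x ((0:ℕ):ℝ) (((k+2:ℕ):ℝ) - ((0:ℕ):ℝ)) (t + ((k+2:ℕ):ℝ)) p := by
    have h0 := hA 0 (by omega)
    rw [ecast0] at h0 ⊢
    rw [pow_zero, one_mul]
    exact theta_eq _ _ _ h0
  -- piece k+1
  have h1c : ((k+2:ℕ):ℝ) - ((k+1:ℕ):ℝ) = 1 := by push_cast; ring
  have h2c : ((k+1:ℕ):ℝ) = ((k+2:ℕ):ℝ) - 1 := by push_cast; ring
  have e1 : Theta (((k+2:ℕ):ℝ) - 1) 1 (t + ((k+2:ℕ):ℝ)) x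
      = ∑' p : ℕ×ℕ, Fx x ((k+1:ℕ):ℝ) (((k+2:ℕ):ℝ) - ((k+1:ℕ):ℝ)) (t + ((k+2:ℕ):ℝ)) p := by
    have h0 := hA (k+1) (by omega)
    have ecast : Fx x ((k+1:ℕ):ℝ) (((k+2:ℕ):ℝ) - ((k+1:ℕ):ℝ)) (t + ((k+2:ℕ):ℝ))
        = Fx x (((k+2:ℕ):ℝ) - 1) 1 (t + ((k+2:ℕ):ℝ)) := by rw [h1c, h2c]
    rw [ecast] at h0 ⊢
    exact theta_eq _ _ _ h0
  -- piece k+2 (inversion)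
  have e2 : x ^ (-t) * Theta 0 ((k+2:ℕ):ℝ) (t + ((k+2:ℕ):ℝ)) (1/x)
      = x^(k+2) * ∑' p : ℕ×ℕ,
          Fx x ((k+2:ℕ):ℝ) (((k+2:ℕ):ℝ) - ((k+2:ℕ):ℝ)) (t + ((k+2:ℕ):ℝ)) p := by
    have h0 := hA (k+2) le_rfl
    have ecast : Fx x ((k+2:ℕ):ℝ) (((k+2:ℕ):ℝ) - ((k+2:ℕ):ℝ)) (t + ((k+2:ℕ):ℝ))
        = Fx x ((k+2:ℕ):ℝ) 0 (t + ((k+2:ℕ):ℝ)) := by rw [sub_self]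
    rw [ecast] at h0 ⊢
    exact inv_piece hx (k+2) t h0
  -- middle sum pieces
  have esum : ∀ ℓ ∈ Finset.Icc 1 k,
      ((-1:ℝ)^(ℓ+1) + ((k+1).choose ℓ : ℝ)) * x^ℓ
          * Theta ((ℓ:ℝ)+1) (((k+2:ℕ):ℝ) - ℓ) (t + ((k+2:ℕ):ℝ) - 1) x
      = ((-1:ℝ)^(ℓ+1) + ((k+1).choose ℓ : ℝ))
          * (x^ℓ * (∑' p : ℕ×ℕ, Fx x (ℓ:ℝ) (((k+2:ℕ):ℝ) - ℓ) (t + ((k+2:ℕ):ℝ)) p)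
            + x^(ℓ+1) * ∑' p : ℕ×ℕ,
                Fx x ((ℓ+1:ℕ):ℝ) (((k+2:ℕ):ℝ) - ((ℓ+1:ℕ):ℝ)) (t + ((k+2:ℕ):ℝ)) p) := by
    intro ℓ hℓ
    have hmem := Finset.mem_Icc.mp hℓ
    rw [theta_B hx (k+2) ℓ t (hA ℓ (by omega)) (hA (ℓ+1) (by omega))]
    ring
  rw [e0, e1, e2, Finset.sum_congr rfl esum]
  ring
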